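/- (Coverage in cochannel single-band case) If all K tiers use a common band with path-loss exponent α > 2, the coverage fraction of tier k is π_k = λ_k (Z_k P_k)^{2/α} / Σ_{ℓ=1}^K λ_ℓ (Z_ℓ P_ℓ)^{2/α}. Consequently π_k is strictly increasing in Z_k, and π_k → 1 as Z_k → ∞. -/

import Mathlib

open MeasureTheory Set

lemma aux_integral {c : ℝ} (hc : 0 < c) :
    ∫ r in Ioi (0 : ℝ), r * Real.exp (-(c * r ^ 2)) = (2 * c)⁻¹ := by
  have hc' : c ≠ 0 := ne_of_gt hc
  have A : ∀ x : ℝ, HasDerivAt (fun x : ℝ => -(2 * c)⁻¹ * Real.exp (-(c * x ^ 2)))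
      (x * Real.exp (-(c * x ^ 2))) x := by
    intro x
    refine (((hasDerivAt_pow 2 x).const_mul c).neg.exp.const_mul (-(2 * c)⁻¹)).congr_deriv ?_
    simp only [Pi.neg_apply, Nat.cast_ofNat]
    field_simp
    ring
  have B : Filter.Tendsto (fun y : ℝ => -(2 * c)⁻¹ * Real.exp (-(c * y ^ 2)))
      Filter.atTop (nhds (-(2 * c)⁻¹ * 0)) := by
    refine Filter.Tendsto.const_mul _ ?_
    refine Real.tendsto_exp_atBot.comp ?_
    have h2 : Filter.Tendsto (fun y : ℝ => c * y ^ 2) Filter.atTop Filter.atTop :=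
      (Filter.tendsto_pow_atTop two_ne_zero).const_mul_atTop hc
    exact Filter.tendsto_neg_atTop_atBot.comp h2
  have hint : IntegrableOn (fun x : ℝ => x * Real.exp (-(c * x ^ 2))) (Ioi 0) := by
    have := integrable_mul_exp_neg_mul_sq hc
    simpa [neg_mul] using this.integrableOn
  have := integral_Ioi_of_hasDerivAt_of_tendsto' (fun x _ => A x) hint B
  rw [this]
  simp

theorem stmt15 (K : ℕ) (hK : 1 < K) (lam P Z : Fin K → ℝ)
    (hlam : ∀ ℓ, 0 < lam ℓ) (hP : ∀ ℓ, 0 < P ℓ) (hZ : ∀ ℓ, 0 < Z ℓ)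
    (α : ℝ) (hα : 2 < α) (k : Fin K) :
    (2 * Real.pi * lam k * ∫ r in Ioi (0 : ℝ),
        r * Real.exp (-(Real.pi * r ^ 2 *
          ∑ ℓ, lam ℓ * (Z ℓ * P ℓ / (Z k * P k)) ^ (2 / α)))
      = lam k * (Z k * P k) ^ (2 / α) / ∑ ℓ, lam ℓ * (Z ℓ * P ℓ) ^ (2 / α))
    ∧ StrictMonoOn (fun z : ℝ =>
        lam k * (z * P k) ^ (2 / α)
          / (lam k * (z * P k) ^ (2 / α)
              + ∑ ℓ ∈ Finset.univ.erase k, lam ℓ * (Z ℓ * P ℓ) ^ (2 / α))) (Ioi 0)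
    ∧ Filter.Tendsto (fun z : ℝ =>
        lam k * (z * P k) ^ (2 / α)
          / (lam k * (z * P k) ^ (2 / α)
              + ∑ ℓ ∈ Finset.univ.erase k, lam ℓ * (Z ℓ * P ℓ) ^ (2 / α)))
        Filter.atTop (nhds 1) := by
  have hp : 0 < 2 / α := div_pos two_pos (by linarith)
  have hZPk : 0 < Z k * P k := mul_pos (hZ k) (hP k)
  have hZPkp : 0 < (Z k * P k) ^ (2 / α) := Real.rpow_pos_of_pos hZPk _
  set S : ℝ := ∑ ℓ, lam ℓ * (Z ℓ * P ℓ) ^ (2 / α) with hS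
  have hSpos : 0 < S :=
    Finset.sum_pos (fun ℓ _ => mul_pos (hlam ℓ)
      (Real.rpow_pos_of_pos (mul_pos (hZ ℓ) (hP ℓ)) _)) ⟨k, Finset.mem_univ k⟩
  have hsum_eq : ∑ ℓ, lam ℓ * (Z ℓ * P ℓ / (Z k * P k)) ^ (2 / α)
      = S / (Z k * P k) ^ (2 / α) := by
    rw [hS, Finset.sum_div]
    refine Finset.sum_congr rfl fun ℓ _ => ?_
    rw [Real.div_rpow (mul_pos (hZ ℓ) (hP ℓ)).le hZPk.le, mul_div_assoc]
  set B : ℝ := ∑ ℓ ∈ Finset.univ.erase k, lam ℓ * (Z ℓ * P ℓ) ^ (2 / α) with hB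
  have hBpos : 0 < B := by
    refine Finset.sum_pos (fun ℓ _ => mul_pos (hlam ℓ)
      (Real.rpow_pos_of_pos (mul_pos (hZ ℓ) (hP ℓ)) _)) ?_
    obtain ⟨j, hj⟩ : ∃ j : Fin K, j ≠ k := by
      haveI : Nontrivial (Fin K) := Fin.nontrivial_iff_two_le.mpr hK
      exact exists_ne k
    exact ⟨j, Finset.mem_erase.mpr ⟨hj, Finset.mem_univ j⟩⟩
  have ha : ∀ z : ℝ, 0 < z → 0 < lam k * (z * P k) ^ (2 / α) := fun z hz =>
    mul_pos (hlam k) (Real.rpow_pos_of_pos (mul_pos hz (hP k)) _)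
  refine ⟨?_, ?_, ?_⟩
  · have hc : 0 < Real.pi * (S / (Z k * P k) ^ (2 / α)) :=
      mul_pos Real.pi_pos (div_pos hSpos hZPkp)
    have : ∫ r in Ioi (0 : ℝ), r * Real.exp (-(Real.pi * r ^ 2 *
        ∑ ℓ, lam ℓ * (Z ℓ * P ℓ / (Z k * P k)) ^ (2 / α)))
        = (2 * (Real.pi * (S / (Z k * P k) ^ (2 / α))))⁻¹ := by
      rw [← aux_integral hc]
      congr 1
      ext r
      rw [hsum_eq]
      ring_nf
    rw [this]
    field_simp
  · intro x hx y hy hxy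
    have hax := ha x hx
    have hay := ha y hy
    simp only
    rw [div_lt_div_iff₀ (by linarith) (by linarith)]
    have hlt : lam k * (x * P k) ^ (2 / α) < lam k * (y * P k) ^ (2 / α) := by
      refine mul_lt_mul_of_pos_left ?_ (hlam k)
      exact Real.rpow_lt_rpow (mul_nonneg (le_of_lt hx) (hP k).le)
        (mul_lt_mul_of_pos_right hxy (hP k)) hp
    nlinarith
  · have hatop : Filter.Tendsto (fun z : ℝ => lam k * (z * P k) ^ (2 / α))
        Filter.atTop Filter.atTop := by
      refine Filter.Tendsto.const_mul_atTop (hlam k) ?_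
      refine (tendsto_rpow_atTop hp).comp ?_
      exact Filter.Tendsto.atTop_mul_const (hP k) Filter.tendsto_id
    have h1 : Filter.Tendsto (fun z : ℝ =>
        (1 + B / (lam k * (z * P k) ^ (2 / α)))⁻¹) Filter.atTop (nhds 1) := by
      have h0 : Filter.Tendsto (fun z : ℝ => B / (lam k * (z * P k) ^ (2 / α)))
          Filter.atTop (nhds 0) := by
        simpa [div_eq_mul_inv] using
          (hatop.inv_tendsto_atTop).const_mul B
      have := ((tendsto_const_nhds.add h0).inv₀ (by norm_num : (1 : ℝ) + 0 ≠ 0))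
      simpa using this
    refine h1.congr' ?_
    filter_upwards [Filter.eventually_gt_atTop (0 : ℝ)] with z hz
    have haz := ha z hz
    rw [eq_div_iff (by linarith)]
    field_simp
    rw [mul_add, mul_div_cancel₀ _ haz.ne', mul_one]
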